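/- Let Λ be a sofic shift, μ a finite word over 𝔄, and i a vertex of the left Krieger cover graph. Then μℰ_i ≠ ∅ if and only if there exists a path α in the left Krieger cover graph with label ℒ(α) = μ and range r(α) = i. Moreover such a path α is unique, and it satisfies μℰ_i ⊆ ℰ_{s(α)}. -/

import Mathlib

open scoped Classical

variable {A : Type*}

/-- Prepend a finite word to a right-infinite sequence. -/
def prepend (μ : List A) (x : ℕ → A) : ℕ → A :=
  fun n => if h : n < μ.length then μ.get ⟨n, h⟩ else x (n - μ.length)

/-- The one-sided shift map. -/
def shift (x : ℕ → A) : ℕ → A := fun n => x (n + 1)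

/-- `Λ_l(x)`: words of length at most `l` that can precede `x` in `X`. -/
def pastSet (X : Set (ℕ → A)) (l : ℕ) (x : ℕ → A) : Set (List A) :=
  {μ | μ.length ≤ l ∧ prepend μ x ∈ X}

/-- The cylinder set `U_μ`. -/
def cyl (X : Set (ℕ → A)) (μ : List A) : Set (ℕ → A) :=
  {x | x ∈ X ∧ ∀ i : Fin μ.length, x i = μ.get i}

/-- `σ^{|μ|}(U_μ)`. -/
def shiftImg (X : Set (ℕ → A)) (μ : List A) : Set (ℕ → A) :=
  shift^[μ.length] '' cyl X μ

/-- `μℰ = {μx ∈ X : x ∈ ℰ}`. -/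
def wordAct (X : Set (ℕ → A)) (μ : List A) (E : Set (ℕ → A)) : Set (ℕ → A) :=
  {y | y ∈ X ∧ ∃ x ∈ E, y = prepend μ x}

/-- An edge of the left Krieger cover graph: a pair of a label `j ∈ 𝔄` and a
range vertex `i` such that `jℰ_i ≠ ∅`. -/
abbrev KEdge (X : Set (ℕ → A)) (m : ℕ) (ℰ : Fin m → Set (ℕ → A)) :=
  {p : A × Fin m // (wordAct X [p.1] (ℰ p.2)).Nonempty}

/-- The label of an edge. -/
def KEdge.lbl {X : Set (ℕ → A)} {m : ℕ} {ℰ : Fin m → Set (ℕ → A)}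
    (e : KEdge X m ℰ) : A := e.1.1

/-- The range of an edge. -/
def KEdge.rng {X : Set (ℕ → A)} {m : ℕ} {ℰ : Fin m → Set (ℕ → A)}
    (e : KEdge X m ℰ) : Fin m := e.1.2

/-- A path in the left Krieger cover graph: a nonempty list of composable
edges (`r(α_t) = s(α_{t+1})`) with label `μ` and range `i`. -/
def IsKPath {A : Type*} {X : Set (ℕ → A)} {m : ℕ} {ℰ : Fin m → Set (ℕ → A)}
    (src : KEdge X m ℰ → Fin m) (μ : List A) (i : Fin m)
    (α : List (KEdge X m ℰ)) : Prop :=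
  α ≠ [] ∧ List.Chain' (fun e f => e.rng = src f) α ∧
    α.map KEdge.lbl = μ ∧ ∀ e ∈ α.getLast?, e.rng = i

lemma shift_prepend_cons (j : A) (ν : List A) (x : ℕ → A) :
    shift (prepend (j :: ν) x) = prepend ν x := by
  funext n
  simp only [shift, prepend, List.length_cons]
  by_cases h : n < ν.length
  · rw [dif_pos (by omega : n + 1 < ν.length + 1), dif_pos h]
    rfl
  · rw [dif_neg (by omega : ¬ n + 1 < ν.length + 1), dif_neg h]
    congr 1
    omega

lemma prepend_cons_eq (j : A) (ν : List A) (x : ℕ → A) :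
    prepend (j :: ν) x = prepend [j] (prepend ν x) := by
  funext n
  cases n with
  | zero => simp [prepend]
  | succ k =>
    have h1 : prepend (j :: ν) x (k + 1) = prepend ν x k :=
      congrFun (shift_prepend_cons j ν x) k
    rw [h1]
    simp [prepend]

lemma class_extend (X : Set (ℕ → A)) (l m : ℕ) (ℰ : Fin m → Set (ℕ → A))
    (hsofic : ∀ k, l ≤ k → ∀ x ∈ X, ∀ y ∈ X,
      (pastSet X l x = pastSet X l y ↔ pastSet X k x = pastSet X k y))
    (hclass : ∀ i : Fin m, ∃ x ∈ X,
      ℰ i = {y | y ∈ X ∧ pastSet X l y = pastSet X l x})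
    (k : Fin m) (j : A) (w z : ℕ → A) (hw : w ∈ ℰ k) (hz : z ∈ ℰ k)
    (hjz : prepend [j] z ∈ X) : prepend [j] w ∈ X := by
  obtain ⟨x, hxX, hEk⟩ := hclass k
  rw [hEk] at hw hz
  have hpast : pastSet X l w = pastSet X l z := hw.2.trans hz.2.symm
  have h2 : pastSet X (l+1) w = pastSet X (l+1) z :=
    (hsofic (l+1) (Nat.le_succ l) w hw.1 z hz.1).mp hpast
  have hj : [j] ∈ pastSet X (l+1) z := ⟨by simp, hjz⟩
  rw [← h2] at hj
  exact hj.2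

/-- `μℰ_i ≠ ∅` iff there is a path `α` in the left Krieger cover
graph with label `μ` and range `i`; such a path is unique and satisfies
`μℰ_i ⊆ ℰ_{s(α)}`. -/
theorem wordAct_nonempty_iff_path [Fintype A] (X : Set (ℕ → A))
    (l m : ℕ) (ℰ : Fin m → Set (ℕ → A))
    (hshift : ∀ x ∈ X, shift x ∈ X)
    (hsofic : ∀ k, l ≤ k → ∀ x ∈ X, ∀ y ∈ X,
      (pastSet X l x = pastSet X l y ↔ pastSet X k x = pastSet X k y))
    (hclass : ∀ i : Fin m, ∃ x ∈ X,
      ℰ i = {y | y ∈ X ∧ pastSet X l y = pastSet X l x})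
    (hcover : ∀ x ∈ X, ∃ i, x ∈ ℰ i)
    (hdisj : ∀ i j : Fin m, i ≠ j → Disjoint (ℰ i) (ℰ j))
    (src : KEdge X m ℰ → Fin m)
    (hsrc : ∀ e : KEdge X m ℰ, wordAct X [e.lbl] (ℰ e.rng) ⊆ ℰ (src e))
    (μ : List A) (hμ : μ ≠ []) (i : Fin m) :
    ((wordAct X μ (ℰ i)).Nonempty ↔ ∃ α, IsKPath src μ i α) ∧
    (∀ α β, IsKPath src μ i α → IsKPath src μ i β → α = β) ∧
    (∀ α, IsKPath src μ i α → ∀ e₀ ∈ α.head?,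
      wordAct X μ (ℰ i) ⊆ ℰ (src e₀))  := by
  have key : ∀ ν : List A, ν ≠ [] →
      ((wordAct X ν (ℰ i)).Nonempty ↔ ∃ α, IsKPath src ν i α) ∧
      (∀ α β, IsKPath src ν i α → IsKPath src ν i β → α = β) ∧
      (∀ α, IsKPath src ν i α → ∀ e₀ ∈ α.head?,
        wordAct X ν (ℰ i) ⊆ ℰ (src e₀)) := by
    intro ν
    induction ν with
    | nil => intro h; exact absurd rfl h
    | cons j ν ih =>
      intro _
      by_cases hν : ν = []
      · -- base case: word is [j]
        subst hν
        have hsingle : ∀ α, IsKPath src [j] i α →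
            ∃ e : KEdge X m ℰ, α = [e] ∧ e.1.1 = j ∧ e.1.2 = i := by
          rintro α ⟨hne, hch, hmap, hlast⟩
          match α with
          | [] => exact absurd rfl hne
          | [e] =>
            refine ⟨e, rfl, ?_, ?_⟩
            · simpa [KEdge.lbl] using hmap
            · exact hlast e (by simp)
          | e :: f :: rest => simp [KEdge.lbl] at hmap
        refine ⟨⟨?_, ?_⟩, ?_, ?_⟩
        · intro h
          refine ⟨[⟨(j, i), h⟩], ?_, ?_, ?_, ?_⟩
          · simp
          · exact List.isChain_singleton _
          · simp [KEdge.lbl]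
          · intro e he
            simp only [List.getLast?_singleton, Option.mem_def, Option.some.injEq] at he
            subst he
            rfl
        · rintro ⟨α, hα⟩
          obtain ⟨e, rfl, hl, hr⟩ := hsingle α hα
          have := e.2
          rwa [hl, hr] at this
        · intro α β hα hβ
          obtain ⟨e, rfl, hel, her⟩ := hsingle α hα
          obtain ⟨f, rfl, hfl, hfr⟩ := hsingle β hβ
          have : e = f := Subtype.ext (Prod.ext (hel.trans hfl.symm) (her.trans hfr.symm))
          rw [this]
        · intro α hα e₀ he₀
          obtain ⟨e, rfl, hl, hr⟩ := hsingle α hα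
          simp only [List.head?_cons, Option.mem_def, Option.some.injEq] at he₀
          subst he₀
          have := hsrc e
          rwa [show e.lbl = j from hl, show e.rng = i from hr] at this
      · -- inductive step: word is j :: ν with ν ≠ []
        obtain ⟨ihNE, ihU, ihS⟩ := ih hν
        have hdec : ∀ α, IsKPath src (j :: ν) i α →
            ∃ (e₀ e₁ : KEdge X m ℰ) (rest : List (KEdge X m ℰ)),
              α = e₀ :: e₁ :: rest ∧ e₀.1.1 = j ∧ e₀.rng = src e₁ ∧
              IsKPath src ν i (e₁ :: rest) := by
          rintro α ⟨hne, hch, hmap, hlast⟩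
          match α with
          | [] => exact absurd rfl hne
          | [e] =>
            exfalso
            simp only [List.map_cons, List.map_nil, List.cons.injEq] at hmap
            exact hν hmap.2.symm
          | e₀ :: e₁ :: rest =>
            simp only [List.map_cons, List.cons.injEq] at hmap
            replace hch := List.isChain_cons_cons.mp hch
            refine ⟨e₀, e₁, rest, rfl, hmap.1, hch.1, ?_⟩
            refine ⟨by simp, hch.2, ?_, ?_⟩
            · simpa using hmap.2
            · intro f hf
              exact hlast f (by rwa [List.getLast?_cons_cons])
        have hcomp : ∀ (e₀ e₁ : KEdge X m ℰ) (rest : List (KEdge X m ℰ)),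
            e₀.1.1 = j → e₀.rng = src e₁ → IsKPath src ν i (e₁ :: rest) →
            IsKPath src (j :: ν) i (e₀ :: e₁ :: rest) := by
          rintro e₀ e₁ rest hl hr ⟨_, hch, hmap, hlast⟩
          refine ⟨by simp, List.isChain_cons_cons.mpr ⟨hr, hch⟩, ?_, ?_⟩
          · show e₀.1.1 :: (e₁ :: rest).map KEdge.lbl = j :: ν
            rw [hl, hmap]
          · intro f hf
            exact hlast f (by rwa [List.getLast?_cons_cons] at hf)
        refine ⟨⟨?_, ?_⟩, ?_, ?_⟩
        · -- nonempty → path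
          rintro ⟨y, hyX, x, hx, rfl⟩
          have hzX : prepend ν x ∈ X := by
            rw [← shift_prepend_cons j ν x]
            exact hshift _ hyX
          have hzmem : prepend ν x ∈ wordAct X ν (ℰ i) := ⟨hzX, x, hx, rfl⟩
          obtain ⟨α', hα'⟩ := ihNE.mp ⟨_, hzmem⟩
          obtain ⟨e₁, rest, rfl⟩ : ∃ e₁ rest, α' = e₁ :: rest := by
            match α' with
            | [] => exact absurd rfl hα'.1
            | e₁ :: rest => exact ⟨e₁, rest, rfl⟩
          have hz1 : prepend ν x ∈ ℰ (src e₁) :=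
            ihS _ hα' e₁ (by simp) hzmem
          have hyj : prepend (j :: ν) x ∈ wordAct X [j] (ℰ (src e₁)) :=
            ⟨hyX, prepend ν x, hz1, prepend_cons_eq j ν x⟩
          exact ⟨(⟨(j, src e₁), ⟨_, hyj⟩⟩ : KEdge X m ℰ) :: e₁ :: rest,
            hcomp _ _ _ rfl rfl hα'⟩
        · -- path → nonempty
          rintro ⟨α, hα⟩
          obtain ⟨e₀, e₁, rest, rfl, hl, hr, hα'⟩ := hdec α hα
          obtain ⟨z, hzX, x, hx, rfl⟩ := ihNE.mpr ⟨_, hα'⟩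
          have hz1 : prepend ν x ∈ ℰ (src e₁) :=
            ihS _ hα' e₁ (by simp) ⟨hzX, x, hx, rfl⟩
          obtain ⟨w, hwX, z', hz', hweq⟩ := e₀.2
          have hr2 : (e₀ : A × Fin m).2 = src e₁ := hr
          rw [hr2] at hz'
          have hweq' : prepend [e₀.1.1] z' ∈ X := hweq ▸ hwX
          rw [hl] at hweq'
          have hjz : prepend [j] (prepend ν x) ∈ X :=
            class_extend X l m ℰ hsofic hclass (src e₁) j _ _ hz1 hz' hweq'
          rw [← prepend_cons_eq] at hjz
          exact ⟨_, hjz, x, hx, rfl⟩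
        · -- uniqueness
          intro α β hα hβ
          obtain ⟨e₀, e₁, rest, rfl, hl, hr, hα'⟩ := hdec α hα
          obtain ⟨f₀, f₁, rest', rfl, hl', hr', hβ'⟩ := hdec β hβ
          have htail : e₁ :: rest = f₁ :: rest' := ihU _ _ hα' hβ'
          have he1 : e₁ = f₁ := by
            have := congrArg List.head? htail
            simpa using this
          have he0 : e₀ = f₀ := Subtype.ext (Prod.ext (hl.trans hl'.symm)
            (by rw [show e₀.1.2 = src e₁ from hr, show f₀.1.2 = src f₁ from hr', he1]))
          rw [he0, htail]
        · -- subset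
          intro α hα e₀' he₀'
          obtain ⟨e₀, e₁, rest, rfl, hl, hr, hα'⟩ := hdec α hα
          simp only [List.head?_cons, Option.mem_def, Option.some.injEq] at he₀'
          subst he₀'
          rename_i dummy
          rintro y ⟨hyX, x, hx, rfl⟩
          have hzX : prepend ν x ∈ X := by
            rw [← shift_prepend_cons j ν x]
            exact hshift _ hyX
          have hz1 : prepend ν x ∈ ℰ (src e₁) :=
            ihS _ hα' e₁ (by simp) ⟨hzX, x, hx, rfl⟩
          have hmem : prepend (j :: ν) x ∈ wordAct X [e₀.lbl] (ℰ e₀.rng) := by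
            rw [show e₀.lbl = j from hl, show e₀.rng = src e₁ from hr]
            exact ⟨hyX, prepend ν x, hz1, prepend_cons_eq j ν x⟩
          exact hsrc e₀ hmem
  exact key μ hμ
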